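/- Let F be a disjoint union of cycles on n vertices, and for each cycle C of F of length ℓ fix an admissible cyclic {3,4,5}-partition 𝔞^C of ℓ. Let (𝒳, R) be the associated F-partition with classes X^a_i of size c^F(a) and X^{a,b}_1 of size c^F(a,b), and let σ : V(F) → 𝒳 be the F-homomorphism obtained by walking each cycle C according to 𝔞^C. Then |σ^{-1}(X)| = |X| for every X ∈ 𝒳, and the orientation of F induced by the orientation of R is 1-regular (every vertex of F has exactly one in-edge and one out-edge). -/
import Mathlib


open Finset

/-- Labels for the classes of an `F`-partition: `mid a i` is `X^a_i` (`2 ≤ i ≤ a`),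
and `one a b` is `X^{a,b}_1`. -/
inductive ClassLabel where
  | mid (a i : ℕ)
  | one (a b : ℕ)
deriving DecidableEq

/-- The cyclic successor relation on the vertices of `F`: the vertex set of `F` is
`Σ C, Σ i, Fin (a C i)`, i.e. vertex `v_{C,i,j}`, and `Step u v` holds iff `v` is the
successor of `u` when walking around the cycle `C` (block by block, following the
cyclic partition `𝔞^C = (a_{C,1},…,a_{C,t_C})`). This is exactly the orientation of
`F` induced by the orientation of the reduced graph `R`. -/
def Step (m : ℕ) (t : Fin m → ℕ) (a : Fin m → ℕ → ℕ)
    (u v : Σ C : Fin m, Σ i : Fin (t C), Fin (a C (i : ℕ))) : Prop :=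
  u.1 = v.1 ∧
    (((u.2.1 : ℕ) = (v.2.1 : ℕ) ∧ (v.2.2 : ℕ) = (u.2.2 : ℕ) + 1) ∨
     ((u.2.2 : ℕ) + 1 = a u.1 (u.2.1 : ℕ) ∧ (v.2.2 : ℕ) = 0 ∧
      (v.2.1 : ℕ) = ((u.2.1 : ℕ) + 1) % t u.1))


lemma mod_aux1 (t i : ℕ) (ht : 0 < t) (hi : i < t) : ((i + t - 1) % t + 1) % t = i := by
  rcases Nat.eq_zero_or_pos i with rfl | hp
  · have h1 : (0 + t - 1) % t = t - 1 := by
      rw [Nat.zero_add]; exact Nat.mod_eq_of_lt (by omega)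
    rw [h1, show t - 1 + 1 = t from by omega, Nat.mod_self]
  · have h1 : (i + t - 1) % t = i - 1 := by
      rw [show i + t - 1 = (i - 1) + t from by omega, Nat.add_mod_right]
      exact Nat.mod_eq_of_lt (by omega)
    rw [h1, show i - 1 + 1 = i from by omega]
    exact Nat.mod_eq_of_lt hi

lemma mod_aux2 (t k : ℕ) (ht : 0 < t) (hk : k < t) : ((k + 1) % t + t - 1) % t = k := by
  rcases Nat.lt_or_ge (k + 1) t with h | h
  · have h1 : (k + 1) % t = k + 1 := Nat.mod_eq_of_lt h
    rw [h1, show k + 1 + t - 1 = k + t from by omega, Nat.add_mod_right]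
    exact Nat.mod_eq_of_lt hk
  · have h2 : k + 1 = t := by omega
    have h1 : (k + 1) % t = 0 := by rw [h2, Nat.mod_self]
    rw [h1]
    have h3 : (0 + t - 1) % t = t - 1 := by
      rw [Nat.zero_add]; exact Nat.mod_eq_of_lt (by omega)
    rw [h3]; omega

lemma vext {m : ℕ} {t : Fin m → ℕ} {a : Fin m → ℕ → ℕ}
    {u v : Σ C : Fin m, Σ i : Fin (t C), Fin (a C (i : ℕ))}
    (h1 : u.1 = v.1) (h2 : (u.2.1 : ℕ) = (v.2.1 : ℕ)) (h3 : (u.2.2 : ℕ) = (v.2.2 : ℕ)) :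
    u = v := by
  obtain ⟨C, i, j⟩ := u
  obtain ⟨C', i', j'⟩ := v
  dsimp at h1 h2 h3
  subst h1
  obtain rfl : i = i' := Fin.ext h2
  obtain rfl : j = j' := Fin.ext h3
  rfl

/-- Fact 4.4: for the `F`-homomorphism `σ` obtained by walking each cycle `C` of `F`
according to its admissible cyclic partition `𝔞^C`, each class `X ∈ 𝒳` receives exactly
`|X|` vertices (i.e. `c^F(a,b)` vertices in `X^{a,b}_1` and `c^F(a)` vertices in each
`X^a_i`), and the induced orientation of `F` is `1`-regular: every vertex has exactly
one out-neighbour and exactly one in-neighbour. -/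
theorem stmt_17 (m : ℕ) (t : Fin m → ℕ) (ht : ∀ C, 0 < t C)
    (a : Fin m → ℕ → ℕ)
    (hmem : ∀ (C : Fin m) (i : ℕ), a C (i % t C) ∈ ({3, 4, 5} : Finset ℕ))
    (hadm : ∀ (C : Fin m), ∀ x ∈ ({3, 4, 5} : Finset ℕ),
      ∀ y ∈ ({3, 4, 5} : Finset ℕ),
      ((Finset.range (t C)).filter fun i =>
          a C i = x ∧ a C ((i + 1) % t C) = y).card =
      ((Finset.range (t C)).filter fun i =>
          a C i = y ∧ a C ((i + 1) % t C) = x).card)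
    (σ : (Σ C : Fin m, Σ i : Fin (t C), Fin (a C (i : ℕ))) → ClassLabel)
    (hσ : ∀ v : Σ C : Fin m, Σ i : Fin (t C), Fin (a C (i : ℕ)),
      σ v = if (v.2.2 : ℕ) = 0
        then ClassLabel.one (a v.1 (((v.2.1 : ℕ) + t v.1 - 1) % t v.1))
          (a v.1 (v.2.1 : ℕ))
        else ClassLabel.mid (a v.1 (v.2.1 : ℕ)) ((v.2.2 : ℕ) + 1)) :
    (∀ x ∈ ({3, 4, 5} : Finset ℕ), ∀ y ∈ ({3, 4, 5} : Finset ℕ),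
      (Finset.univ.filter fun v => σ v = ClassLabel.one x y).card =
        ∑ C, ((Finset.range (t C)).filter fun i =>
          a C i = x ∧ a C ((i + 1) % t C) = y).card) ∧
    (∀ x ∈ ({3, 4, 5} : Finset ℕ), ∀ i : ℕ, 2 ≤ i → i ≤ x →
      (Finset.univ.filter fun v => σ v = ClassLabel.mid x i).card =
        ∑ C, ((Finset.range (t C)).filter fun j => a C j = x).card) ∧
    (∀ u, ∃! v, Step m t a u v) ∧ (∀ v, ∃! u, Step m t a u v) := by
  have hpos : ∀ (C : Fin m) (k : ℕ), k < t C → 0 < a C k := by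
    intro C k hk
    have h := hmem C k
    rw [Nat.mod_eq_of_lt hk] at h
    simp only [Finset.mem_insert, Finset.mem_singleton] at h
    omega
  have hone : ∀ (v : Σ C : Fin m, Σ i : Fin (t C), Fin (a C (i : ℕ))) (x y : ℕ),
      σ v = ClassLabel.one x y ↔
        ((v.2.2 : ℕ) = 0 ∧ a v.1 (((v.2.1 : ℕ) + t v.1 - 1) % t v.1) = x ∧
          a v.1 (v.2.1 : ℕ) = y) := by
    intro v x y
    rw [hσ v]
    by_cases h : (v.2.2 : ℕ) = 0 <;> simp [h]
  have hmid : ∀ (v : Σ C : Fin m, Σ i : Fin (t C), Fin (a C (i : ℕ))) (x i : ℕ),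
      σ v = ClassLabel.mid x i ↔
        (¬ (v.2.2 : ℕ) = 0 ∧ a v.1 (v.2.1 : ℕ) = x ∧ (v.2.2 : ℕ) + 1 = i) := by
    intro v x i
    rw [hσ v]
    by_cases h : (v.2.2 : ℕ) = 0 <;> simp [h]
  refine ⟨?_, ?_, ?_, ?_⟩
  · -- part 1
    intro x hx y hy
    rw [← Finset.card_sigma]
    refine Finset.card_bij'
      (fun v _ => (⟨v.1, ((v.2.1 : ℕ) + t v.1 - 1) % t v.1⟩ : Σ _ : Fin m, ℕ))
      (fun p _ => ⟨p.1, ⟨(p.2 + 1) % t p.1, Nat.mod_lt _ (ht p.1)⟩,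
        ⟨0, hpos _ _ (Nat.mod_lt _ (ht p.1))⟩⟩) ?_ ?_ ?_ ?_
    · intro v hv
      have hv' := (Finset.mem_filter.mp hv).2
      rw [hone] at hv'
      obtain ⟨h0, hxv, hyv⟩ := hv'
      simp only [Finset.mem_sigma, Finset.mem_univ, Finset.mem_filter, Finset.mem_range, true_and]
      refine ⟨Nat.mod_lt _ (ht v.1), hxv, ?_⟩
      rw [mod_aux1 _ _ (ht v.1) v.2.1.isLt]
      exact hyv
    · intro p hp
      simp only [Finset.mem_sigma, Finset.mem_univ, Finset.mem_filter, Finset.mem_range,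
        true_and] at hp
      obtain ⟨hlt, hxp, hyp⟩ := hp
      rw [Finset.mem_filter]
      refine ⟨Finset.mem_univ _, ?_⟩
      rw [hone]
      exact ⟨rfl, by rw [mod_aux2 _ _ (ht p.1) hlt]; exact hxp, hyp⟩
    · intro v hv
      have hv' := (Finset.mem_filter.mp hv).2
      rw [hone] at hv'
      exact vext rfl (mod_aux1 _ _ (ht v.1) v.2.1.isLt) hv'.1.symm
    · intro p hp
      simp only [Finset.mem_sigma, Finset.mem_univ, Finset.mem_filter, Finset.mem_range,
        true_and] at hp
      obtain ⟨C, k⟩ := p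
      simp only
      congr 1
      exact mod_aux2 _ _ (ht C) hp.1
  · -- part 2
    intro x hx i h2i hix
    have hxpos : 0 < x := by
      simp only [Finset.mem_insert, Finset.mem_singleton] at hx; omega
    rw [← Finset.card_sigma]
    refine Finset.card_bij'
      (fun v _ => (⟨v.1, (v.2.1 : ℕ)⟩ : Σ _ : Fin m, ℕ))
      (fun p hp => ⟨p.1, ⟨p.2, by
          simp only [Finset.mem_sigma, Finset.mem_univ, Finset.mem_filter,
            Finset.mem_range, true_and] at hp
          exact hp.1⟩,
        ⟨i - 1, by
          simp only [Finset.mem_sigma, Finset.mem_univ, Finset.mem_filter,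
            Finset.mem_range, true_and] at hp
          simp only [hp.2]; omega⟩⟩) ?_ ?_ ?_ ?_
    · intro v hv
      have hv' := (Finset.mem_filter.mp hv).2
      rw [hmid] at hv'
      simp only [Finset.mem_sigma, Finset.mem_univ, Finset.mem_filter, Finset.mem_range, true_and]
      exact ⟨v.2.1.isLt, hv'.2.1⟩
    · intro p hp
      have hp' := hp
      simp only [Finset.mem_sigma, Finset.mem_univ, Finset.mem_filter,
        Finset.mem_range, true_and] at hp'
      rw [Finset.mem_filter]
      refine ⟨Finset.mem_univ _, ?_⟩
      rw [hmid]
      refine ⟨?_, hp'.2, ?_⟩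
      · show ¬ i - 1 = 0
        omega
      · show i - 1 + 1 = i
        omega
    · intro v hv
      have hv' := (Finset.mem_filter.mp hv).2
      rw [hmid] at hv'
      obtain ⟨h0, -, hji⟩ := hv'
      refine vext rfl rfl ?_
      show i - 1 = (v.2.2 : ℕ)
      omega
    · intro p hp
      rfl
  · -- part 3: unique successor
    rintro ⟨C, i, j⟩
    by_cases h : (j : ℕ) + 1 = a C (i : ℕ)
    · refine ⟨⟨C, ⟨((i : ℕ) + 1) % t C, Nat.mod_lt _ (ht C)⟩,
        ⟨0, hpos C _ (Nat.mod_lt _ (ht C))⟩⟩, ⟨rfl, Or.inr ⟨h, rfl, rfl⟩⟩, ?_⟩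
      rintro ⟨C', i', j'⟩ ⟨h1, h2⟩
      dsimp at h1
      subst h1
      rcases h2 with ⟨hi', hj'⟩ | ⟨_, hj', hi'⟩
      · dsimp at hi' hj'
        obtain rfl : i = i' := Fin.ext hi'
        have := j'.isLt
        omega
      · exact vext rfl hi' hj'
    · have hlt : (j : ℕ) + 1 < a C (i : ℕ) := by have := j.isLt; omega
      refine ⟨⟨C, i, ⟨(j : ℕ) + 1, hlt⟩⟩, ⟨rfl, Or.inl ⟨rfl, rfl⟩⟩, ?_⟩
      rintro ⟨C', i', j'⟩ ⟨h1, h2⟩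
      dsimp at h1
      subst h1
      rcases h2 with ⟨hi', hj'⟩ | ⟨ha', _, _⟩
      · exact vext rfl hi'.symm hj'
      · exact absurd ha' h
  · -- part 4: unique predecessor
    rintro ⟨C, i, j⟩
    by_cases h : (j : ℕ) = 0
    · refine ⟨⟨C, ⟨((i : ℕ) + t C - 1) % t C, Nat.mod_lt _ (ht C)⟩,
        ⟨a C (((i : ℕ) + t C - 1) % t C) - 1,
          Nat.sub_lt (hpos C _ (Nat.mod_lt _ (ht C))) one_pos⟩⟩,
        ⟨rfl, Or.inr ⟨?_, h, ?_⟩⟩, ?_⟩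
      · dsimp
        have := hpos C (((i : ℕ) + t C - 1) % t C) (Nat.mod_lt _ (ht C))
        omega
      · exact (mod_aux1 _ _ (ht C) i.isLt).symm
      · rintro ⟨C', i', j'⟩ ⟨h1, h2⟩
        dsimp at h1
        subst h1
        rcases h2 with ⟨_, hj'⟩ | ⟨ha', _, hi'⟩
        · dsimp at hj'; omega
        · dsimp at ha' hi'
          have hmm := mod_aux2 (t C') ((i' : ℕ)) (ht C') i'.isLt
          rw [← hi'] at hmm
          refine vext rfl hmm.symm ?_
          show (j' : ℕ) = a C' (((i : ℕ) + t C' - 1) % t C') - 1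
          rw [hmm]
          omega
    · have hlt : (j : ℕ) - 1 < a C (i : ℕ) := by have := j.isLt; omega
      refine ⟨⟨C, i, ⟨(j : ℕ) - 1, hlt⟩⟩, ⟨rfl, Or.inl ⟨rfl, by dsimp; omega⟩⟩, ?_⟩
      rintro ⟨C', i', j'⟩ ⟨h1, h2⟩
      dsimp at h1
      subst h1
      rcases h2 with ⟨hi', hj'⟩ | ⟨_, hj0, _⟩
      · dsimp at hi' hj'
        refine vext rfl hi' ?_
        show (j' : ℕ) = (j : ℕ) - 1
        omega
      · dsimp at hj0; exact absurd hj0 h
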